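/- For every n ≥ 1, the map σ̂_n is a bijection of I_n = {0,1,…,2^n−1} onto itself. -/
import Mathlib


/-- The Sierpinski gasket pattern: `g n m` is `g_m^{(n)} ∈ {0,1}` for `1 ≤ m ≤ n`,
defined by `g_1^{(n)} = g_n^{(n)} = 1` and
`g_m^{(n)} = g_{m-1}^{(n-1)} + g_m^{(n-1)} mod 2` for `2 ≤ m ≤ n−1`. -/
def g : ℕ → ℕ → ℕ
  | 0, _ => 0
  | n + 1, m =>
    if m = 1 ∨ m = n + 1 then 1
    else if 2 ≤ m ∧ m ≤ n then (g n (m - 1) + g n m) % 2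
    else 0

/-- The doubling operators `T_0` and `T_1` on binary tuples. -/
def Tmap (α : ℕ) (s : List ℕ) : List ℕ :=
  if α = 0 then s ++ s else s ++ s.map (fun x => 1 - x)

/-- The binary tuple `ν⁽ⁿ⁾ = (T_{g_1^{(n)}} ∘ T_{g_2^{(n)}} ∘ ⋯ ∘ T_{g_{n-1}^{(n)}})(0)`,
of length `2^{n-1}`. -/
def nuList (n : ℕ) : List ℕ :=
  (List.range (n - 1)).foldr (fun i acc => Tmap (g n (i + 1)) acc) [0]

/-- The entry `ν_m^{(n)}`. -/
def nu (n m : ℕ) : ℕ := (nuList n).getD m 0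

/-- The map `σ̂_n` on `I_n = {0, …, 2ⁿ−1}`: `σ̂_1 = id` and
`σ̂_n(j) = σ̂_{n-1}(j mod 2^{n-1}) + 2^{n-1}·c_j` where `c_{2m} = 1 − ν_m^{(n)}` and
`c_{2m+1} = ν_m^{(n)}`. -/
def sigmaHat : ℕ → ℕ → ℕ
  | 0, j => j
  | 1, j => j
  | n + 2, j =>
    sigmaHat (n + 1) (j % 2 ^ (n + 1)) +
      2 ^ (n + 1) * (if j % 2 = 0 then 1 - nu (n + 2) (j / 2) else nu (n + 2) (j / 2))
lemma Tmap_length (a : ℕ) (s : List ℕ) : (Tmap a s).length = 2 * s.length := by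
  unfold Tmap; split <;> simp <;> ring

lemma Tmap_le (a : ℕ) (s : List ℕ) (h : ∀ x ∈ s, x ≤ 1) : ∀ x ∈ Tmap a s, x ≤ 1 := by
  unfold Tmap; split <;> intro x hx
  · rcases List.mem_append.1 hx with h' | h' <;> exact h x h'
  · rcases List.mem_append.1 hx with h' | h'
    · exact h x h'
    · rcases List.mem_map.1 h' with ⟨y, _, rfl⟩; omega

lemma foldr_Tmap_length (f : ℕ → ℕ) (l : List ℕ) (init : List ℕ) :
    (l.foldr (fun i acc => Tmap (f i) acc) init).length = 2 ^ l.length * init.length := by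
  induction l with
  | nil => simp
  | cons a t ih => simp [Tmap_length, ih, pow_succ]; ring

lemma foldr_Tmap_le (f : ℕ → ℕ) (l : List ℕ) (init : List ℕ) (h : ∀ x ∈ init, x ≤ 1) :
    ∀ x ∈ l.foldr (fun i acc => Tmap (f i) acc) init, x ≤ 1 := by
  induction l with
  | nil => exact h
  | cons a t ih => exact Tmap_le _ _ ih

/-- the inner list -/
def L (k : ℕ) : List ℕ :=
  ((List.range k).map Nat.succ).foldr (fun i acc => Tmap (g (k + 2) (i + 1)) acc) [0]

lemma L_length (k : ℕ) : (L k).length = 2 ^ k := by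
  have := foldr_Tmap_length (fun i => g (k + 2) (i + 1)) ((List.range k).map Nat.succ) [0]
  simpa [L] using this

lemma L_le (k : ℕ) : ∀ x ∈ L k, x ≤ 1 := by
  apply foldr_Tmap_le; simp

lemma nuList_eq (k : ℕ) : nuList (k + 2) = L k ++ (L k).map (fun x => 1 - x) := by
  have h1 : g (k + 2) 1 = 1 := by simp [g]
  show (List.range (k + 1)).foldr (fun i acc => Tmap (g (k + 2) (i + 1)) acc) [0] = _
  rw [List.range_succ_eq_map]
  simp only [List.foldr_cons, List.foldr_map]
  rw [show ((List.range k).foldr (fun i acc => Tmap (g (k+2) (i.succ + 1)) acc) [0]) = L k from ?_]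
  · simp [Tmap, h1]
  · simp [L, List.foldr_map]

lemma nu_sum (k m : ℕ) (h : m < 2 ^ k) : nu (k + 2) m + nu (k + 2) (m + 2 ^ k) = 1 := by
  have hm : m < (L k).length := by rw [L_length]; exact h
  have hle := L_le k _ (List.getElem_mem hm)
  have h1 : nu (k + 2) m = (L k)[m] := by
    rw [nu, nuList_eq, List.getD_append _ _ _ _ (by simpa [L_length] using hm),
      List.getD_eq_getElem _ _ hm]
  have h2 : nu (k + 2) (m + 2 ^ k) = 1 - (L k)[m] := by
    rw [nu, nuList_eq, List.getD_append_right _ _ _ _ (by rw [L_length]; omega)]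
    rw [L_length, Nat.add_sub_cancel]
    rw [List.getD_eq_getElem _ _ (by simpa [L_length] using hm)]
    simp [hm]
  omega

lemma nu_le (n m : ℕ) : nu n m ≤ 1 := by
  rcases lt_or_ge m (nuList n).length with h | h
  · rw [nu, List.getD_eq_getElem _ _ h]
    exact foldr_Tmap_le _ _ _ (by simp) _ (List.getElem_mem h)
  · rw [nu, List.getD_eq_default _ _ h]; omega

/-- For every `n ≥ 1`, the map `σ̂ₙ` is a bijection of
`Iₙ = {0, 1, …, 2ⁿ−1}` onto itself. -/
theorem sigmaHat_bijOn (n : ℕ) (hn : 1 ≤ n) :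
    Set.BijOn (sigmaHat n) {j : ℕ | j < 2 ^ n} {j : ℕ | j < 2 ^ n} := by
  induction n with
  | zero => omega
  | succ k ih =>
    rcases Nat.eq_or_lt_of_le hn with h1 | h1
    · -- n = 1
      have : k = 0 := by omega
      subst this
      exact Set.bijOn_id _ |>.congr (fun x _ => rfl)
    · -- n = k+1 with k ≥ 1
      obtain ⟨k, rfl⟩ : ∃ m, k = m + 1 := ⟨k - 1, by omega⟩
      have IH := ih (by omega)
      have hmaps : Set.MapsTo (sigmaHat (k + 2)) {j : ℕ | j < 2 ^ (k + 2)}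
          {j : ℕ | j < 2 ^ (k + 2)} := by
        intro j hj
        simp only [Set.mem_setOf_eq] at *
        have h1 : sigmaHat (k + 1) (j % 2 ^ (k + 1)) < 2 ^ (k + 1) :=
          IH.mapsTo (Nat.mod_lt _ (by positivity))
        have h2 : (if j % 2 = 0 then 1 - nu (k + 2) (j / 2) else nu (k + 2) (j / 2)) ≤ 1 := by
          split <;> [omega; exact nu_le _ _]
        have h3 : 2 ^ (k + 1) * (if j % 2 = 0 then 1 - nu (k + 2) (j / 2)
            else nu (k + 2) (j / 2)) ≤ 2 ^ (k + 1) * 1 := Nat.mul_le_mul_left _ h2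
        have h4 : (2:ℕ) ^ (k + 2) = 2 ^ (k + 1) * 2 := by ring
        show sigmaHat (k + 1) (j % 2 ^ (k + 1)) + 2 ^ (k + 1) * _ < 2 ^ (k + 2)
        omega
      have hinj : Set.InjOn (sigmaHat (k + 2)) {j : ℕ | j < 2 ^ (k + 2)} := by
        intro j1 hj1 j2 hj2 heq
        simp only [Set.mem_setOf_eq] at hj1 hj2
        set c1 := (if j1 % 2 = 0 then 1 - nu (k + 2) (j1 / 2) else nu (k + 2) (j1 / 2)) with hc1
        set c2 := (if j2 % 2 = 0 then 1 - nu (k + 2) (j2 / 2) else nu (k + 2) (j2 / 2)) with hc2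
        have hs1 : sigmaHat (k + 1) (j1 % 2 ^ (k + 1)) < 2 ^ (k + 1) :=
          IH.mapsTo (Nat.mod_lt _ (by positivity))
        have hs2 : sigmaHat (k + 1) (j2 % 2 ^ (k + 1)) < 2 ^ (k + 1) :=
          IH.mapsTo (Nat.mod_lt _ (by positivity))
        have hc1le : c1 ≤ 1 := by rw [hc1]; split <;> [omega; exact nu_le _ _]
        have hc2le : c2 ≤ 1 := by rw [hc2]; split <;> [omega; exact nu_le _ _]
        have heq' : sigmaHat (k + 1) (j1 % 2 ^ (k + 1)) + 2 ^ (k + 1) * c1 =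
            sigmaHat (k + 1) (j2 % 2 ^ (k + 1)) + 2 ^ (k + 1) * c2 := heq
        have hboth : c1 = c2 ∧ sigmaHat (k + 1) (j1 % 2 ^ (k + 1)) =
            sigmaHat (k + 1) (j2 % 2 ^ (k + 1)) := by
          have d1 : c1 = 0 ∨ c1 = 1 := by omega
          have d2 : c2 = 0 ∨ c2 = 1 := by omega
          rcases d1 with h | h <;> rcases d2 with h' | h' <;> rw [h, h'] at heq' <;>
            simp only [Nat.mul_zero, Nat.mul_one, Nat.add_zero] at heq' <;>
            exact ⟨by omega, by omega⟩
        obtain ⟨hcc, hss⟩ := hboth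
        have hmod : j1 % 2 ^ (k + 1) = j2 % 2 ^ (k + 1) :=
          IH.injOn (Nat.mod_lt _ (by positivity)) (Nat.mod_lt _ (by positivity)) hss
        -- j1 and j2 agree mod 2^(k+1) and are < 2^(k+2)
        by_contra hne
        -- WLOG j2 = j1 + 2^(k+1)
        have key : ∀ a b : ℕ, a < 2 ^ (k + 2) → b < 2 ^ (k + 2) → b = a + 2 ^ (k + 1) →
            (if a % 2 = 0 then 1 - nu (k + 2) (a / 2) else nu (k + 2) (a / 2)) ≠
            (if b % 2 = 0 then 1 - nu (k + 2) (b / 2) else nu (k + 2) (b / 2)) := by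
          intro a b ha hb hba
          have hpar : b % 2 = a % 2 := by
            subst hba
            have : 2 ∣ 2 ^ (k + 1) := dvd_pow_self 2 (by omega)
            omega
          have hdiv : b / 2 = a / 2 + 2 ^ k := by
            subst hba
            have : (2:ℕ) ^ (k + 1) = 2 ^ k * 2 := by ring
            omega
          have hak : a / 2 < 2 ^ k := by
            have : a < 2 ^ (k + 1) := by
              have h2 : (2:ℕ) ^ (k + 2) = 2 ^ (k + 1) * 2 := by ring
              omega
            have h3 : (2:ℕ) ^ (k + 1) = 2 ^ k * 2 := by ring
            omega
          have hsum := nu_sum k (a / 2) hak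
          have hn1 := nu_le (k + 2) (a / 2)
          have hn2 := nu_le (k + 2) (a / 2 + 2 ^ k)
          rw [hpar, hdiv]
          split <;> omega
        have hP : (0:ℕ) < 2 ^ (k + 1) := by positivity
        have h2pow : (2:ℕ) ^ (k + 2) = 2 ^ (k + 1) * 2 := by ring
        have hd1 : j1 / 2 ^ (k + 1) < 2 := by
          rw [Nat.div_lt_iff_lt_mul hP]; omega
        have hd2 : j2 / 2 ^ (k + 1) < 2 := by
          rw [Nat.div_lt_iff_lt_mul hP]; omega
        have e1 : j1 = 2 ^ (k + 1) * (j1 / 2 ^ (k + 1)) + j1 % 2 ^ (k + 1) :=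
          (Nat.div_add_mod _ _).symm
        have e2 : j2 = 2 ^ (k + 1) * (j2 / 2 ^ (k + 1)) + j2 % 2 ^ (k + 1) :=
          (Nat.div_add_mod _ _).symm
        have d1 : j1 / 2 ^ (k + 1) = 0 ∨ j1 / 2 ^ (k + 1) = 1 := by
          rcases Nat.lt_succ_iff_lt_or_eq.mp hd1 with h | h
          · exact Or.inl (Nat.lt_one_iff.mp h)
          · exact Or.inr h
        have d2 : j2 / 2 ^ (k + 1) = 0 ∨ j2 / 2 ^ (k + 1) = 1 := by
          rcases Nat.lt_succ_iff_lt_or_eq.mp hd2 with h | h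
          · exact Or.inl (Nat.lt_one_iff.mp h)
          · exact Or.inr h
        rcases d1 with h1 | h1 <;> rcases d2 with h2 | h2 <;> rw [h1] at e1 <;>
            rw [h2] at e2 <;>
            simp only [Nat.mul_zero, Nat.mul_one, Nat.zero_add] at e1 e2
        · omega
        · exact key j1 j2 hj1 hj2 (by omega) hcc
        · exact key j2 j1 hj2 hj1 (by omega) hcc.symm
        · omega
      exact (Set.Finite.injOn_iff_bijOn_of_mapsTo (Set.finite_Iio _ |>.subset
        (fun x hx => hx)) hmaps).1 hinj
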